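/- Let b₁, b₂ ∈ K with N(b₁) = N(b₂). Then the polynomial f₁(x) = x^σ + b₁·x^(σ²) is scattered if and only if f₂(x) = x^σ + b₂·x^(σ²) is scattered. -/

import Mathlib

/-- `q-1` divides `q^a - 1`. -/
private lemma aux_sub_one_dvd (q a : ℕ) : q - 1 ∣ q ^ a - 1 := by
  simpa using Nat.sub_dvd_pow_sub_pow q 1 a

/-- gcd of `q^s*(q^s-1)` and `q^n-1` is `q-1` when `gcd s n = 1`. -/
private lemma aux_gcd (q n s : ℕ) (hq : 2 ≤ q) (hn : 3 ≤ n) (hs : 0 < s)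
    (hsn : Nat.Coprime s n) :
    Nat.gcd (q ^ s * (q ^ s - 1)) (q ^ n - 1) = q - 1 := by
  have hqn1 : 0 < q ^ n := pow_pos (by omega) n
  -- q^s is coprime to q^n - 1
  have hcop : Nat.Coprime (q ^ s) (q ^ n - 1) := by
    have h1 : Nat.Coprime (q ^ n) (q ^ n - 1) := by
      rw [Nat.coprime_self_sub_right (by omega)]
      exact Nat.coprime_one_right _
    have hq' : Nat.Coprime q (q ^ n - 1) :=
      (Nat.coprime_pow_left_iff (by omega) q (q ^ n - 1)).mp h1
    exact Nat.Coprime.pow_left s hq'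
  rw [hcop.gcd_mul_left_cancel (q ^ s - 1)]
  -- now show gcd (q^s - 1) (q^n - 1) = q - 1
  apply Nat.dvd_antisymm
  · -- gcd divides q - 1
    obtain ⟨a, -, ha⟩ := Nat.exists_mul_mod_eq_one_of_coprime hsn (by omega)
    set b := s * a / n with hb
    have hsab : s * a = n * b + 1 := by
      have h := Nat.div_add_mod (s * a) n
      rw [ha, ← hb] at h
      exact h.symm
    set d := Nat.gcd (q ^ s - 1) (q ^ n - 1) with hd
    have hd1 : d ∣ q ^ (s * a) - 1 := by
      refine dvd_trans (dvd_trans (Nat.gcd_dvd_left _ _) ?_) dvd_rfl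
      have : q ^ (s * a) = (q ^ s) ^ a := by rw [← pow_mul]
      rw [this]
      simpa using Nat.sub_dvd_pow_sub_pow (q ^ s) 1 a
    have hd2 : d ∣ q ^ (n * b) - 1 := by
      refine dvd_trans (Nat.gcd_dvd_right _ _) ?_
      have : q ^ (n * b) = (q ^ n) ^ b := by rw [← pow_mul]
      rw [this]
      simpa using Nat.sub_dvd_pow_sub_pow (q ^ n) 1 b
    have hd3 : d ∣ q * (q ^ (n * b) - 1) := Dvd.dvd.mul_left hd2 q
    have hP : 0 < q ^ (n * b) := pow_pos (by omega) _
    have hQ : q ^ (s * a) = q * q ^ (n * b) := by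
      rw [hsab, pow_succ, mul_comm]
    have hmul : q * (q ^ (n * b) - 1) = q * q ^ (n * b) - q := by
      rw [Nat.mul_sub, mul_one]
    have hle : q * (q ^ (n * b) - 1) ≤ q ^ (s * a) - 1 := by
      have : q ≤ q * q ^ (n * b) := Nat.le_mul_of_pos_right q hP
      omega
    have := Nat.dvd_sub hd1 hd3
    have heq : q ^ (s * a) - 1 - q * (q ^ (n * b) - 1) = q - 1 := by
      have : q ≤ q * q ^ (n * b) := Nat.le_mul_of_pos_right q hP
      omega
    rwa [heq] at this
  · exact Nat.dvd_gcd (aux_sub_one_dvd q s) (aux_sub_one_dvd q n)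

/-- If norms agree, `b₂ = b₁ * u ^ (q^s * (q^s - 1))` for some nonzero `u`. -/
private lemma aux_key (q n s : ℕ) (hq : 2 ≤ q) (hn : 3 ≤ n) (hs : 0 < s)
    (hsn : Nat.Coprime s n) (K : Type*) [Field K] [Fintype K]
    (hK : Fintype.card K = q ^ n) (b₁ b₂ : K)
    (hb : b₁ ^ ((q ^ n - 1) / (q - 1)) = b₂ ^ ((q ^ n - 1) / (q - 1))) :
    ∃ u : K, u ≠ 0 ∧ b₂ = b₁ * u ^ (q ^ s * (q ^ s - 1)) := by
  have hqn1 : 0 < q ^ n := pow_pos (by omega) n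
  set N : ℕ := q ^ n - 1 with hN
  set m : ℕ := N / (q - 1) with hm
  have hdvd : q - 1 ∣ N := aux_sub_one_dvd q n
  have hmN : m * (q - 1) = N := Nat.div_mul_cancel hdvd
  have hqn3 : 8 ≤ q ^ n := by
    calc (8 : ℕ) = 2 ^ 3 := by norm_num
    _ ≤ q ^ 3 := Nat.pow_le_pow_left hq 3
    _ ≤ q ^ n := Nat.pow_le_pow_right (by omega) hn
  have hm0 : 0 < m := by
    rcases Nat.eq_zero_or_pos m with h | h
    · exfalso; rw [h] at hmN; omega
    · exact h
  by_cases h1 : b₁ = 0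
  · have h2 : b₂ = 0 := by
      have : b₂ ^ m = 0 := by rw [← hb, h1, zero_pow hm0.ne']
      exact pow_eq_zero_iff hm0.ne' |>.mp this
    exact ⟨1, one_ne_zero, by rw [h1, h2, zero_mul]⟩
  · have h2 : b₂ ≠ 0 := by
      intro h2
      apply h1
      have : b₁ ^ m = 0 := by rw [hb, h2, zero_pow hm0.ne']
      exact pow_eq_zero_iff hm0.ne' |>.mp this
    -- work in units
    set z : Kˣ := (Units.mk0 b₁ h1)⁻¹ * Units.mk0 b₂ h2 with hz
    have hzval : (z : K) = b₁⁻¹ * b₂ := by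
      rw [hz]; push_cast; simp
    have hzm : z ^ m = 1 := by
      have hv : (z : K) ^ m = 1 := by
        rw [hzval, mul_pow, inv_pow, hb, inv_mul_cancel₀ (pow_ne_zero m h2)]
      rw [Units.ext_iff, Units.val_pow_eq_pow_val, hv, Units.val_one]
    obtain ⟨g, hg⟩ := IsCyclic.exists_generator (α := Kˣ)
    have hord : orderOf g = N := by
      rw [orderOf_eq_card_of_forall_mem_zpowers hg, Nat.card_units,
        Nat.card_eq_fintype_card, hK]
    obtain ⟨a, ha0⟩ := hg z
    have ha : g ^ a = z := ha0
    have hgN : g ^ (N : ℤ) = 1 := by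
      rw [← hord]
      exact_mod_cast pow_orderOf_eq_one g
    -- N ∣ a * m
    have hNdvd : (N : ℤ) ∣ a * m := by
      rw [← hord, orderOf_dvd_iff_zpow_eq_one, zpow_mul, ha, zpow_natCast, hzm]
    -- q - 1 ∣ a
    have hq1a : ((q : ℤ) - 1) ∣ a := by
      have hcast : ((q : ℤ) - 1) = ((q - 1 : ℕ) : ℤ) := by
        have : 1 ≤ q := by omega
        push_cast [Nat.cast_sub this]
        ring
      rw [hcast]
      obtain ⟨c, hc⟩ := hNdvd
      have hNm : (N : ℤ) = (m : ℤ) * ((q - 1 : ℕ) : ℤ) := by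
        exact_mod_cast hmN.symm
      rw [hNm] at hc
      have hm' : (m : ℤ) ≠ 0 := by exact_mod_cast hm0.ne'
      refine ⟨c, ?_⟩
      have : (m : ℤ) * a = (m : ℤ) * (((q - 1 : ℕ) : ℤ) * c) := by ring_nf; linarith [hc]
      exact mul_left_cancel₀ hm' this
    obtain ⟨a', ha'⟩ := hq1a
    -- Bezout for gcd(k, N) = q - 1
    set k : ℕ := q ^ s * (q ^ s - 1) with hk
    have hgcd : Nat.gcd k N = q - 1 := aux_gcd q n s hq hn hs hsn
    have hbez : ((q - 1 : ℕ) : ℤ) = k * Nat.gcdA k N + N * Nat.gcdB k N := by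
      rw [← hgcd]; exact Nat.gcd_eq_gcd_ab k N
    set u : Kˣ := g ^ (Nat.gcdA k N * a') with hu
    have hcast : ((q : ℤ) - 1) = ((q - 1 : ℕ) : ℤ) := by
      have : 1 ≤ q := by omega
      push_cast [Nat.cast_sub this]
      ring
    have hzu : z = u ^ k := by
      have step : g ^ a = (g ^ (Nat.gcdA k N * a')) ^ (k : ℤ) *
          (g ^ (N : ℤ)) ^ (Nat.gcdB k N * a') := by
        rw [← zpow_mul, ← zpow_mul, ← zpow_add]
        congr 1
        rw [ha', hcast, hbez]
        ring
      rw [hgN, one_zpow, mul_one] at step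
      rw [← ha, step, hu, ← zpow_natCast (g ^ (Nat.gcdA k N * a')) k]
    refine ⟨(u : K), Units.ne_zero u, ?_⟩
    have hval : b₁⁻¹ * b₂ = (u : K) ^ k := by
      rw [← hzval, hzu, Units.val_pow_eq_pow_val]
    field_simp at hval
    rw [hval]

/-- Transfer scatteredness along `b₂ = b₁ * u ^ (σ(σ-1))`. -/
private lemma aux_transfer (σ q : ℕ) (hσ : 1 ≤ σ) (K : Type*) [Field K]
    (b₁ b₂ u : K) (hu : u ≠ 0) (hbu : b₂ = b₁ * u ^ (σ * (σ - 1)))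
    (h1 : ∀ x t : K, x ≠ 0 → t ≠ 0 →
      x * (t ^ σ + b₁ * t ^ (σ ^ 2)) = t * (x ^ σ + b₁ * x ^ (σ ^ 2)) →
      ∃ c : K, c ^ q = c ∧ x = c * t) :
    ∀ x t : K, x ≠ 0 → t ≠ 0 →
      x * (t ^ σ + b₂ * t ^ (σ ^ 2)) = t * (x ^ σ + b₂ * x ^ (σ ^ 2)) →
      ∃ c : K, c ^ q = c ∧ x = c * t := by
  intro x t hx ht hxt
  have hsq : σ ^ 2 = σ + σ * (σ - 1) := by
    obtain ⟨σ', rfl⟩ := Nat.exists_eq_add_of_le hσ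
    have h1 : 1 + σ' - 1 = σ' := by omega
    rw [h1]
    ring
  have key : ∀ y : K, (u * y) ^ σ + b₁ * (u * y) ^ (σ ^ 2) =
      u ^ σ * (y ^ σ + b₂ * y ^ (σ ^ 2)) := by
    intro y
    rw [hbu, mul_pow, mul_pow, hsq, pow_add, pow_add]
    ring
  have hxt' : (u * x) * ((u * t) ^ σ + b₁ * (u * t) ^ (σ ^ 2)) =
      (u * t) * ((u * x) ^ σ + b₁ * (u * x) ^ (σ ^ 2)) := by
    rw [key t, key x]
    calc (u * x) * (u ^ σ * (t ^ σ + b₂ * t ^ (σ ^ 2)))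
        = (u * u ^ σ) * (x * (t ^ σ + b₂ * t ^ (σ ^ 2))) := by ring
      _ = (u * u ^ σ) * (t * (x ^ σ + b₂ * x ^ (σ ^ 2))) := by rw [hxt]
      _ = (u * t) * (u ^ σ * (x ^ σ + b₂ * x ^ (σ ^ 2))) := by ring
  obtain ⟨c, hc, hct⟩ := h1 (u * x) (u * t) (mul_ne_zero hu hx) (mul_ne_zero hu ht) hxt'
  refine ⟨c, hc, ?_⟩
  have : u * x = u * (c * t) := by rw [hct]; ring
  exact mul_left_cancel₀ hu this

/-- If `N(b₁) = N(b₂)`, then `x^σ + b₁ x^(σ²)` is scattered iff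
`x^σ + b₂ x^(σ²)` is. -/
theorem stmt_6 (q n s : ℕ) (hq : IsPrimePow q) (hn : 3 ≤ n) (hs : 0 < s)
    (hsn : Nat.Coprime s n) (K : Type*) [Field K] [Fintype K]
    (hK : Fintype.card K = q ^ n) (b₁ b₂ : K)
    (hb : b₁ ^ ((q ^ n - 1) / (q - 1)) = b₂ ^ ((q ^ n - 1) / (q - 1))) :
    (∀ x t : K, x ≠ 0 → t ≠ 0 →
      x * (t ^ (q ^ s) + b₁ * t ^ ((q ^ s) ^ 2)) =
        t * (x ^ (q ^ s) + b₁ * x ^ ((q ^ s) ^ 2)) →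
      ∃ c : K, c ^ q = c ∧ x = c * t) ↔
    (∀ x t : K, x ≠ 0 → t ≠ 0 →
      x * (t ^ (q ^ s) + b₂ * t ^ ((q ^ s) ^ 2)) =
        t * (x ^ (q ^ s) + b₂ * x ^ ((q ^ s) ^ 2)) →
      ∃ c : K, c ^ q = c ∧ x = c * t) := by
  have hq2 : 2 ≤ q := hq.two_le
  have hσ : 1 ≤ q ^ s := Nat.one_le_pow s q (by omega)
  obtain ⟨u, hu, hbu⟩ := aux_key q n s hq2 hn hs hsn K hK b₁ b₂ hb
  obtain ⟨v, hv, hbv⟩ := aux_key q n s hq2 hn hs hsn K hK b₂ b₁ hb.symm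
  constructor
  · exact aux_transfer (q ^ s) q hσ K b₁ b₂ u hu hbu
  · exact aux_transfer (q ^ s) q hσ K b₂ b₁ v hv hbv
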